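/- With S_φ f = Σ_n ⟨f, φ_n⟩ φ_n, one has the exact operator equalities S_φ H_{ψ,φ}^α = H_{φ,ψ}^α S_φ = S_φ^α, where S_φ^α f = Σ_n α_n ⟨f, φ_n⟩ φ_n on its natural domain. -/

import Mathlib

noncomputable section

open ContinuousLinearMap

local notation "⟪" x ", " y "⟫" => @inner ℂ _ _ x y

theorem intertwining_S_phi
    {H : Type*} [NormedAddCommGroup H] [InnerProductSpace ℂ H] [CompleteSpace H]
    (e : HilbertBasis ℕ ℂ H) (T : H ≃L[ℂ] H) (φ ψ : ℕ → H)
    (hφ : ∀ n, φ n = T (e n))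
    (hψ : ∀ n, ψ n = adjoint (T.symm : H →L[ℂ] H) (e n)) (α : ℕ → ℂ)
    (Sφ : H →L[ℂ] H) (hSφ : ∀ f, HasSum (fun n => ⟪φ n, f⟫ • φ n) (Sφ f)) :
    ∀ f : H,
      ((Summable fun n => (α n * ⟪φ n, f⟫) • ψ n) ↔
        (Summable fun n => (α n * ⟪ψ n, Sφ f⟫) • φ n)) ∧
      ((Summable fun n => (α n * ⟪φ n, f⟫) • ψ n) ↔
        (Summable fun n => (α n * ⟪φ n, f⟫) • φ n)) ∧
      (∀ g : H, HasSum (fun n => (α n * ⟪φ n, f⟫) • ψ n) g →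
        HasSum (fun n => (α n * ⟪ψ n, Sφ f⟫) • φ n) (Sφ g) ∧
        HasSum (fun n => (α n * ⟪φ n, f⟫) • φ n) (Sφ g)) := by
  intro f
  set A : H →L[ℂ] H := (T : H →L[ℂ] H)
  set B : H →L[ℂ] H := (T.symm : H →L[ℂ] H)
  -- adjoint B is a two-sided inverse of adjoint A
  have hBA : ∀ x, adjoint A (adjoint B x) = x := by
    intro x
    refine ext_inner_right ℂ fun y => ?_
    rw [adjoint_inner_left, adjoint_inner_left]
    simp [A, B]
  have hAB : ∀ x, adjoint B (adjoint A x) = x := by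
    intro x
    refine ext_inner_right ℂ fun y => ?_
    rw [adjoint_inner_left, adjoint_inner_left]
    simp [A, B]
  -- Sφ = T ∘ T*
  have hS : ∀ x, Sφ x = T (adjoint A x) := by
    intro x
    have h1 : HasSum (fun n => ⟪e n, adjoint A x⟫ • e n) (adjoint A x) := by
      simpa [e.repr_apply_apply] using e.hasSum_repr (adjoint A x)
    have h2 : HasSum (fun n => ⟪φ n, x⟫ • φ n) (T (adjoint A x)) := by
      have := h1.mapL (T : H →L[ℂ] H)
      simpa [hφ, adjoint_inner_right, A] using this
    exact (hSφ x).unique h2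
  -- key coefficient identity
  have hcoef : ∀ n, ⟪ψ n, Sφ f⟫ = ⟪φ n, f⟫ := by
    intro n
    rw [hψ, hS, adjoint_inner_left, hφ]
    simp [B, adjoint_inner_right, A]
  -- Sφ (ψ n) = φ n
  have hSψ : ∀ n, Sφ (ψ n) = φ n := by
    intro n
    rw [hS, hψ, hBA, hφ]
  -- summability transfers
  have key : ∀ (c : ℕ → ℂ),
      (Summable fun n => c n • ψ n) ↔ (Summable fun n => c n • φ n) := by
    intro c
    constructor
    · intro h
      have h1 : Summable fun n => c n • e n := by
        have := h.mapL (adjoint A)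
        simpa [hψ, hBA] using this
      have := h1.mapL (T : H →L[ℂ] H)
      simpa [hφ] using this
    · intro h
      have h1 : Summable fun n => c n • e n := by
        have := h.mapL (T.symm : H →L[ℂ] H)
        simpa [hφ] using this
      have := h1.mapL (adjoint B)
      simpa [hψ] using this
  refine ⟨?_, key _, ?_⟩
  · simpa [hcoef] using key (fun n => α n * ⟪φ n, f⟫)
  · intro g hg
    have h1 : HasSum (fun n => (α n * ⟪φ n, f⟫) • φ n) (Sφ g) := by
      have := hg.mapL Sφ
      simpa [hSψ] using this
    exact ⟨by simpa [hcoef] using h1, h1⟩
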